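/- Let M = M(h,c) be the Verma module over the Virasoro algebra and (M,δ) a 1-differential module over (Vir, d_{1,a}) with a ∈ ℂ* and δ ≠ −id_M. Then there exists ξ ∈ ℂ such that δ(v) = (ξa^{−i} − 1)v for every v in the weight space M_{−i}, for all i ∈ ℤ_{≥0}. -/

import Mathlib

/-- The defining bracket relations of the Virasoro algebra on a family `L : ℤ → V`
and a central element `C`. -/
def VirRel {V : Type*} [LieRing V] [LieAlgebra ℂ V] (L : ℤ → V) (C : V) : Prop :=
  (∀ m n : ℤ, ⁅L m, L n⁆ = ((n : ℂ) - (m : ℂ)) • L (m + n)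
      + (if m + n = 0 then ((m : ℂ) ^ 3 - (m : ℂ)) / 12 else 0) • C) ∧
  ∀ m : ℤ, ⁅C, L m⁆ = 0

/-- `f` has the values of `φ_n ∘ τ_a` on the basis:
`f(L_i) = (a^i/n)(L_{ni} - δ_{i,0}((n²-1)/24)C)` and `f(C) = nC`. -/
def PhiTau {V : Type*} [LieRing V] [LieAlgebra ℂ V] (L : ℤ → V) (C : V)
    (n : ℤ) (a : ℂ) (f : V →ₗ[ℂ] V) : Prop :=
  (∀ i : ℤ, f (L i) = (a ^ i / (n : ℂ)) •
      (L (n * i) - (if i = 0 then ((n : ℂ) ^ 2 - 1) / 24 else 0) • C)) ∧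
  f C = (n : ℂ) • C

/-- Iterated bracket monomials acting on a vector. -/
def VirMon {V M : Type*} [LieRing V] [AddCommGroup M] [LieRingModule V M]
    (L : ℤ → V) (v₀ : M) : List ℤ → M
  | [] => v₀
  | j :: t => ⁅L j, VirMon L v₀ t⁆

@[simp] lemma virMon_nil {V M : Type*} [LieRing V] [AddCommGroup M] [LieRingModule V M]
    (L : ℤ → V) (v₀ : M) : VirMon L v₀ [] = v₀ := rfl

@[simp] lemma virMon_cons {V M : Type*} [LieRing V] [AddCommGroup M] [LieRingModule V M]
    (L : ℤ → V) (v₀ : M) (j : ℤ) (t : List ℤ) :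
    VirMon L v₀ (j :: t) = ⁅L j, VirMon L v₀ t⁆ := rfl

lemma neg_list_sum_neg : ∀ js : List ℤ, js ≠ [] → (∀ j ∈ js, j < 0) → js.sum < 0 := by
  intro js
  induction js with
  | nil => simp
  | cons j t ih =>
    intro _ hneg
    rw [List.sum_cons]
    have hj : j < 0 := hneg j List.mem_cons_self
    rcases eq_or_ne t [] with rfl | ht
    · simpa using hj
    · have := ih ht (fun k hk => hneg k (List.mem_cons_of_mem j hk))
      omega

/-- for a 1-differential module structure `δ ≠ -id` on the Verma
module `M(h,c)` over `(Vir, d_{1,a})`, there is `ξ ∈ ℂ` with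
`δ(v) = (ξ a^{-i} - 1)v` for all `v` in the weight space `M_{-i}`, `i ∈ ℤ₊`. -/
theorem stmt_12 {V : Type*} [LieRing V] [LieAlgebra ℂ V]
    (L : ℤ → V) (C : V)
    (b : Module.Basis (Option ℤ) ℂ V) (hbL : ∀ i : ℤ, b (some i) = L i) (hbC : b none = C)
    (hrel : VirRel L C)
    {M : Type*} [AddCommGroup M] [Module ℂ M] [LieRingModule V M] [LieModule ℂ V M]
    (h c : ℂ) (v₀ : M) (hv₀ : v₀ ≠ 0)
    (hw0 : ⁅L 0, v₀⁆ = h • v₀) (hwC : ⁅C, v₀⁆ = c • v₀)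
    (hwpos : ∀ i : ℤ, 0 < i → ⁅L i, v₀⁆ = 0)
    (hgen : ∀ N : LieSubmodule ℂ V M, v₀ ∈ N → ∀ m : M, m ∈ N)
    (hdec : ∀ m : M, m ∈ Submodule.span ℂ
      {w : M | ∃ k : ℕ, ⁅L 0, w⁆ = (h - (k : ℂ)) • w ∧ ⁅C, w⁆ = c • w})
    (a : ℂ) (ha : a ≠ 0)
    (f : V →ₗ[ℂ] V) (hf : PhiTau L C 1 a f)
    (δ : M →ₗ[ℂ] M) (hδ : δ ≠ -(LinearMap.id : M →ₗ[ℂ] M))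
    (hdm : ∀ (x : V) (m : M),
      δ ⁅x, m⁆ = ⁅f x - x, m⁆ + ⁅x, δ m⁆ + ⁅f x - x, δ m⁆) :
    ∃ ξ : ℂ, ∀ (i : ℕ) (v : M),
      (⁅L 0, v⁆ = (h - (i : ℂ)) • v ∧ ⁅C, v⁆ = c • v) →
      δ v = (ξ * a ^ (-(i : ℤ)) - 1) • v := by
  classical
  -- the endomorphism `m ↦ ⁅L 0, m⁆`
  set l0 : Module.End ℂ M :=
    { toFun := fun m => ⁅L 0, m⁆
      map_add' := fun m n => lie_add (L 0) m n
      map_smul' := fun t m => lie_smul t (L 0) m } with hl0def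
  have hl0 : ∀ m : M, l0 m = ⁅L 0, m⁆ := fun m => rfl
  -- `f` on the basis
  have hfL : ∀ j : ℤ, f (L j) = a ^ j • L j := by
    intro j
    have h1 := hf.1 j
    norm_num at h1
    exact h1
  have hfC : f C = C := by
    have h1 := hf.2
    norm_num at h1
    exact h1
  -- bracket with `L 0`
  have hL0L : ∀ j : ℤ, ⁅L 0, L j⁆ = (j : ℂ) • L j := by
    intro j
    rw [hrel.1 0 j]
    norm_num
  -- the map `D = id + δ`
  set D : M →ₗ[ℂ] M := LinearMap.id + δ with hDdef
  have hDapp : ∀ m : M, D m = m + δ m := fun m => rfl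
  have hkey : ∀ (x : V) (m : M), D ⁅x, m⁆ = ⁅f x, D m⁆ := by
    intro x m
    rw [hDapp, hDapp, hdm x m, lie_add, sub_lie, sub_lie]
    abel
  have hDL : ∀ (j : ℤ) (m : M), D ⁅L j, m⁆ = a ^ j • ⁅L j, D m⁆ := by
    intro j m
    rw [hkey, hfL, smul_lie]
  -- monomials
  set Mon : List ℤ → M := VirMon L v₀ with hMonDef
  have hMonWt : ∀ js : List ℤ, ⁅L 0, Mon js⁆ = (h + (js.sum : ℂ)) • Mon js := by
    intro js
    induction js with
    | nil => simpa [hMonDef] using hw0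
    | cons j t ih =>
      rw [hMonDef] at ih ⊢
      rw [virMon_cons, leibniz_lie, hL0L j, ih, smul_lie, lie_smul, List.sum_cons]
      push_cast
      module
  have hMonC : ∀ js : List ℤ, ⁅C, Mon js⁆ = c • Mon js := by
    intro js
    induction js with
    | nil => simpa [hMonDef] using hwC
    | cons j t ih =>
      rw [hMonDef] at ih ⊢
      rw [virMon_cons, leibniz_lie, hrel.2 j, ih, zero_lie, zero_add, lie_smul]
  -- the span of normally ordered monomials
  set NS : Set M := {v₀} ∪ {m | ∃ js : List ℤ, js ≠ [] ∧ (∀ j ∈ js, j < 0) ∧ m = Mon js}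
    with hNSdef
  set Q : Submodule ℂ M := Submodule.span ℂ NS with hQdef
  have hv₀Q : v₀ ∈ Q := Submodule.subset_span (Or.inl rfl)
  have hnormQ : ∀ js : List ℤ, (∀ j ∈ js, j < 0) → Mon js ∈ Q := by
    intro js hjs
    cases js with
    | nil => exact hv₀Q
    | cons j t =>
      exact Submodule.subset_span (Or.inr ⟨j :: t, by simp, hjs, rfl⟩)
  -- bracketing with negative modes preserves `Q`
  have hHneg : ∀ (k : ℤ), k < 0 → ∀ q ∈ Q, ⁅L k, q⁆ ∈ Q := by
    intro k hk q hq
    induction hq using Submodule.span_induction with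
    | mem x hx =>
      rcases hx with rfl | ⟨js, _, hneg, rfl⟩
      · exact hnormQ [k] (by simpa using hk)
      · exact hnormQ (k :: js) (by
          intro j hj
          rcases List.mem_cons.mp hj with rfl | hj
          · exact hk
          · exact hneg j hj)
    | zero => simpa using Q.zero_mem
    | add x y hx hy ihx ihy => rw [lie_add]; exact Q.add_mem ihx ihy
    | smul t x hx ihx => rw [lie_smul]; exact Q.smul_mem t ihx
  -- bracketing normal monomials with arbitrary modes lands in `Q`
  have hG : ∀ js : List ℤ, (∀ j ∈ js, j < 0) → ∀ i : ℤ, ⁅L i, Mon js⁆ ∈ Q := by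
    intro js
    induction js with
    | nil =>
      intro _ i
      rcases lt_trichotomy i 0 with hi | rfl | hi
      · exact hnormQ [i] (by simpa using hi)
      · show ⁅L 0, v₀⁆ ∈ Q
        rw [hw0]; exact Q.smul_mem h hv₀Q
      · show ⁅L i, v₀⁆ ∈ Q
        rw [hwpos i hi]; exact Q.zero_mem
    | cons k t ih =>
      intro hneg i
      have hk : k < 0 := hneg k List.mem_cons_self
      have ht : ∀ j ∈ t, j < 0 := fun j hj => hneg j (List.mem_cons_of_mem k hj)
      rw [hMonDef, virMon_cons, leibniz_lie, hrel.1 i k, add_lie, smul_lie, smul_lie]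
      refine Q.add_mem (Q.add_mem (Q.smul_mem _ ?_) ?_) (hHneg k hk _ ?_)
      · exact ih ht (i + k)
      · rw [hMonC t]
        exact Q.smul_mem _ (Q.smul_mem c (hnormQ t ht))
      · exact ih ht i
  -- `Q` is stable under all the `L j` and under `C`
  have hQL : ∀ (i : ℤ) (q : M), q ∈ Q → ⁅L i, q⁆ ∈ Q := by
    intro i q hq
    induction hq using Submodule.span_induction with
    | mem x hx =>
      rcases hx with rfl | ⟨js, _, hneg, rfl⟩
      · exact hG [] (by simp) i
      · exact hG js hneg i
    | zero => simpa using Q.zero_mem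
    | add x y hx hy ihx ihy => rw [lie_add]; exact Q.add_mem ihx ihy
    | smul t x hx ihx => rw [lie_smul]; exact Q.smul_mem t ihx
  have hQC : ∀ q ∈ Q, ⁅C, q⁆ ∈ Q := by
    intro q hq
    induction hq using Submodule.span_induction with
    | mem x hx =>
      rcases hx with rfl | ⟨js, _, hneg, rfl⟩
      · rw [hwC]; exact Q.smul_mem c hv₀Q
      · rw [hMonC]; exact Q.smul_mem c (hnormQ js hneg)
    | zero => simpa using Q.zero_mem
    | add x y hx hy ihx ihy => rw [lie_add]; exact Q.add_mem ihx ihy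
    | smul t x hx ihx => rw [lie_smul]; exact Q.smul_mem t ihx
  have hlie : ∀ (x : V) (q : M), q ∈ Q → ⁅x, q⁆ ∈ Q := by
    intro x q hq
    have hx : x ∈ Submodule.span ℂ (Set.range b) := by
      rw [b.span_eq]; exact Submodule.mem_top
    induction hx using Submodule.span_induction with
    | mem y hy =>
      obtain ⟨i, rfl⟩ := hy
      cases i with
      | none => rw [hbC]; exact hQC q hq
      | some j => rw [hbL]; exact hQL j q hq
    | zero => rw [zero_lie]; exact Q.zero_mem
    | add x y hx hy ihx ihy => rw [add_lie]; exact Q.add_mem ihx ihy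
    | smul t x hx ihx => rw [smul_lie]; exact Q.smul_mem t ihx
  -- hence `Q = ⊤` via `hgen`
  have hQtop : ∀ m : M, m ∈ Q := by
    intro m
    exact hgen { toSubmodule := Q, lie_mem := fun {x n} hn => hlie x n hn } hv₀Q m
  -- eigenspace facts
  have hMonEig : ∀ js : List ℤ, Mon js ∈ Module.End.eigenspace l0 (h + (js.sum : ℂ)) :=
    fun js => Module.End.mem_eigenspace_iff.mpr (hMonWt js)
  have hv₀Eig : v₀ ∈ Module.End.eigenspace l0 h := Module.End.mem_eigenspace_iff.mpr hw0
  have hsep : ∀ (μ : ℂ) (u : M), l0 u = μ • u →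
      u ∈ (⨆ ν ∈ {ν : ℂ | ν ≠ μ}, Module.End.eigenspace l0 ν) → u = 0 := by
    intro μ u hu hmem
    have hdisj := (Module.End.eigenspaces_iSupIndep l0).disjoint_biSup
      (x := μ) (y := {ν : ℂ | ν ≠ μ}) (by simp)
    exact (Submodule.disjoint_def.mp hdisj) u (Module.End.mem_eigenspace_iff.mpr hu) hmem
  -- `D v₀` is a multiple of `v₀`
  have hDv₀wt : ⁅L 0, D v₀⁆ = h • D v₀ := by
    have h1 := hDL 0 v₀
    rw [hw0, map_smul, zpow_zero, one_smul] at h1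
    exact h1.symm
  obtain ⟨ξ, hξ⟩ : ∃ ξ : ℂ, D v₀ = ξ • v₀ := by
    have hQle : Q ≤ Submodule.span ℂ {v₀} ⊔
        (⨆ ν ∈ {ν : ℂ | ν ≠ h}, Module.End.eigenspace l0 ν) := by
      rw [hQdef]
      apply Submodule.span_le.mpr
      rintro x hx
      rcases hx with hx1 | ⟨js, hne, hneg, rfl⟩
      · rw [show x = v₀ from hx1]
        exact Submodule.mem_sup_left (Submodule.mem_span_singleton_self v₀)
      · refine Submodule.mem_sup_right ?_
        have hsum : (js.sum : ℂ) ≠ 0 := by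
          exact_mod_cast (neg_list_sum_neg js hne hneg).ne
        have hμ : h + (js.sum : ℂ) ∈ {ν : ℂ | ν ≠ h} := by
          simp only [Set.mem_setOf_eq]
          intro hcon
          exact hsum (by linear_combination hcon)
        exact le_biSup (fun ν => Module.End.eigenspace l0 ν) hμ (hMonEig js)
    have hmem := hQle (hQtop (D v₀))
    rw [Submodule.mem_sup] at hmem
    obtain ⟨y, hy, z, hz, hyz⟩ := hmem
    obtain ⟨ξ, rfl⟩ := Submodule.mem_span_singleton.mp hy
    refine ⟨ξ, ?_⟩
    have hzwt : l0 z = h • z := by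
      have : z = D v₀ - ξ • v₀ := by rw [← hyz]; abel
      rw [this, map_sub, map_smul, hl0, hl0, hDv₀wt, hw0]
      module
    have hz0 : z = 0 := hsep h z hzwt hz
    rw [← hyz, hz0, add_zero]
  -- `D` on monomials
  have hDMon : ∀ js : List ℤ, D (Mon js) = (ξ * a ^ js.sum) • Mon js := by
    intro js
    induction js with
    | nil => simpa [hMonDef] using hξ
    | cons j t ih =>
      rw [hMonDef] at ih ⊢
      rw [virMon_cons, hDL, ih, lie_smul, smul_smul, List.sum_cons, zpow_add₀ ha]
      match_scalars
      ring
  -- main computation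
  refine ⟨ξ, ?_⟩
  intro i v hv
  obtain ⟨hv0, -⟩ := hv
  set t : ℂ := ξ * a ^ (-(i : ℤ)) with htdef
  have hDvwt : ⁅L 0, D v⁆ = (h - (i : ℂ)) • D v := by
    have h1 := hDL 0 v
    rw [hv0, map_smul, zpow_zero, one_smul] at h1
    exact h1.symm
  have hu_wt : l0 (D v - t • v) = (h - (i : ℂ)) • (D v - t • v) := by
    rw [map_sub, map_smul, hl0, hl0, hDvwt, hv0]
    module
  have hTS : ∀ m ∈ Q, D m - t • m ∈
      (⨆ ν ∈ {ν : ℂ | ν ≠ h - (i : ℂ)}, Module.End.eigenspace l0 ν) := by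
    intro m hm
    induction hm using Submodule.span_induction with
    | mem x hx =>
      rcases hx with hx1 | ⟨js, hne, hneg, rfl⟩
      · rw [show x = v₀ from hx1]
        rcases eq_or_ne (i : ℂ) 0 with hi | hi
        · have hz : D v₀ - t • v₀ = 0 := by
            rw [hξ, htdef]
            have hii : (i : ℤ) = 0 := by exact_mod_cast hi
            rw [hii]
            simp
          rw [hz]; exact Submodule.zero_mem _
        · have hμ : h ∈ {ν : ℂ | ν ≠ h - (i : ℂ)} := by
            simp only [Set.mem_setOf_eq]
            intro hcon
            exact hi (by linear_combination hcon)
          refine le_biSup (fun ν => Module.End.eigenspace l0 ν) hμ ?_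
          rw [hξ]
          have hz : (ξ : ℂ) • v₀ - t • v₀ = (ξ - t) • v₀ := by module
          rw [hz]
          exact Submodule.smul_mem _ _ hv₀Eig
      · rcases eq_or_ne js.sum (-(i : ℤ)) with hsum | hsum
        · have : D (Mon js) - t • Mon js = 0 := by
            rw [hDMon, htdef, hsum, sub_self]
          rw [this]; exact Submodule.zero_mem _
        · have hμ : h + (js.sum : ℂ) ∈ {ν : ℂ | ν ≠ h - (i : ℂ)} := by
            simp only [Set.mem_setOf_eq]
            intro hcon
            apply hsum
            have : (js.sum : ℂ) = -(i : ℂ) := by linear_combination hcon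
            exact_mod_cast this
          refine le_biSup (fun ν => Module.End.eigenspace l0 ν) hμ ?_
          rw [hDMon]
          have : (ξ * a ^ js.sum) • Mon js - t • Mon js
              = (ξ * a ^ js.sum - t) • Mon js := by module
          rw [this]
          exact Submodule.smul_mem _ _ (hMonEig js)
    | zero => simpa using Submodule.zero_mem _
    | add x y hx hy ihx ihy =>
      have : D (x + y) - t • (x + y) = (D x - t • x) + (D y - t • y) := by
        rw [map_add]; module
      rw [this]; exact Submodule.add_mem _ ihx ihy
    | smul r x hx ihx =>
      have : D (r • x) - t • (r • x) = r • (D x - t • x) := by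
        rw [map_smul]; module
      rw [this]; exact Submodule.smul_mem _ r ihx
  have hu0 : D v - t • v = 0 := hsep _ _ hu_wt (hTS v (hQtop v))
  have hDv : D v = t • v := by rwa [sub_eq_zero] at hu0
  have : v + δ v = t • v := by rw [← hDapp, hDv]
  rw [htdef] at this
  have hgoal : δ v = (ξ * a ^ (-(i : ℤ)) - 1) • v := by
    rw [sub_smul, one_smul, ← this]
    abel
  exact hgoal
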